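/- Let ψ_p(q) = #{(m,n) : m ≥ n ≥ 0, p ∤ C(m,n), m + p·n = q} (extended by 0 to negative q). Then for every nonnegative integer q and r ∈ {0,...,p−1}, ψ_p(pq + r) = Σ_{a=0}^{r} ψ_p(q − a). -/

import Mathlib

/-- `ψ_p(q)`: number of `(m,n)` with `m ≥ n ≥ 0`, `p ∤ C(m,n)` and `m + p·n = q`
(extended by `0` to negative `q`). -/
noncomputable def psi (p : ℕ) (q : ℤ) : ℕ :=
  {mn : ℕ × ℕ | mn.2 ≤ mn.1 ∧ (mn.1 : ℤ) + (p : ℤ) * (mn.2 : ℤ) = q ∧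
    ¬ p ∣ Nat.choose mn.1 mn.2}.ncard

/-- Finset version of the set counted by `psi`. -/
noncomputable def Fs (p : ℕ) (q : ℤ) : Finset (ℕ × ℕ) := by
  classical
  exact (Finset.range (q.toNat + 1) ×ˢ Finset.range (q.toNat + 1)).filter
    (fun mn => mn.2 ≤ mn.1 ∧ (mn.1 : ℤ) + (p : ℤ) * (mn.2 : ℤ) = q ∧
      ¬ p ∣ Nat.choose mn.1 mn.2)

lemma mem_Fs {p : ℕ} (hp : 0 < p) {q : ℤ} {mn : ℕ × ℕ} :
    mn ∈ Fs p q ↔ mn.2 ≤ mn.1 ∧ (mn.1 : ℤ) + (p : ℤ) * (mn.2 : ℤ) = q ∧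
      ¬ p ∣ Nat.choose mn.1 mn.2 := by
  classical
  simp only [Fs, Finset.mem_filter, Finset.mem_product, Finset.mem_range]
  refine ⟨fun h => h.2, fun h => ⟨⟨?_, ?_⟩, h⟩⟩ <;>
  · have h2 := h.2.1
    have hn : (mn.2 : ℤ) ≤ (p : ℤ) * mn.2 := by
      nlinarith [Int.natCast_nonneg mn.2, (by exact_mod_cast hp : (1 : ℤ) ≤ p)]
    have h3 : (mn.1 : ℤ) ≤ q := by nlinarith [Int.natCast_nonneg mn.2]
    have h4 : (mn.2 : ℤ) ≤ q := by nlinarith [Int.natCast_nonneg mn.1]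
    omega

lemma psi_eq_card {p : ℕ} (hp : 0 < p) (q : ℤ) : psi p q = (Fs p q).card := by
  rw [psi, ← Set.ncard_coe_finset]
  congr 1
  ext mn
  simp only [Set.mem_setOf_eq, Finset.coe_filter, Finset.mem_coe]
  exact (mem_Fs hp).symm

lemma lucas_not_dvd {p : ℕ} (hp : p.Prime) {m n r a : ℕ} (hr : r < p) (ha : a < p) :
    ¬ p ∣ Nat.choose (p * m + r) (p * n + a) ↔ a ≤ r ∧ ¬ p ∣ Nat.choose m n := by
  haveI : Fact p.Prime := ⟨hp⟩
  have hmod : (p * m + r) % p = r := by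
    rw [Nat.mul_add_mod, Nat.mod_eq_of_lt hr]
  have hmod' : (p * n + a) % p = a := by
    rw [Nat.mul_add_mod, Nat.mod_eq_of_lt ha]
  have hdiv : (p * m + r) / p = m := by
    rw [Nat.mul_add_div hp.pos, Nat.div_eq_of_lt hr, add_zero]
  have hdiv' : (p * n + a) / p = n := by
    rw [Nat.mul_add_div hp.pos, Nat.div_eq_of_lt ha, add_zero]
  have h := Choose.choose_modEq_choose_mod_mul_choose_div_nat
    (p := p) (n := p * m + r) (k := p * n + a)
  rw [hmod, hmod', hdiv, hdiv'] at h
  have hdvd : p ∣ Nat.choose (p * m + r) (p * n + a) ↔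
      p ∣ Nat.choose r a * Nat.choose m n := by
    constructor
    · intro hd
      exact (Nat.modEq_zero_iff_dvd).1 ((h.symm.trans (Nat.modEq_zero_iff_dvd.2 hd)))
    · intro hd
      exact (Nat.modEq_zero_iff_dvd).1 ((h.trans (Nat.modEq_zero_iff_dvd.2 hd)))
  rw [hdvd, hp.dvd_mul]
  have hra : p ∣ Nat.choose r a ↔ ¬ a ≤ r := by
    constructor
    · intro hd har
      have hfac := Nat.choose_mul_factorial_mul_factorial har
      have hpr : p ∣ Nat.factorial r := by
        rw [← hfac]
        exact Dvd.dvd.mul_right (Dvd.dvd.mul_right hd _) _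
      exact absurd (hp.dvd_factorial.1 hpr) (by omega)
    · intro har
      rw [Nat.choose_eq_zero_of_lt (by omega)]
      exact dvd_zero p
  tauto

theorem psi_rec (p : ℕ) (hp : p.Prime) (q : ℕ) (r : ℕ) (hr : r < p) :
    psi p ((p : ℤ) * q + r) = ∑ a ∈ Finset.range (r + 1), psi p ((q : ℤ) - a) := by
  classical
  have hp0 : 0 < p := hp.pos
  rw [psi_eq_card hp0]
  have hsum : ∑ a ∈ Finset.range (r + 1), psi p ((q : ℤ) - a)
      = ∑ a ∈ Finset.range (r + 1), (Fs p ((q : ℤ) - a)).card :=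
    Finset.sum_congr rfl fun a _ => psi_eq_card hp0 _
  rw [hsum]
  have key : Fs p ((p : ℤ) * q + r) = (Finset.range (r + 1)).biUnion
      (fun a => (Fs p ((q : ℤ) - a)).image (fun mn => (p * mn.1 + r, p * mn.2 + a))) := by
    ext mn
    simp only [Finset.mem_biUnion, Finset.mem_range, Finset.mem_image]
    rw [mem_Fs hp0]
    constructor
    · rintro ⟨hle, heq, hdvd⟩
      obtain ⟨m, n⟩ := mn
      simp only at hle heq hdvd ⊢
      have heqN : m + p * n = p * q + r := by exact_mod_cast heq
      -- n ≤ q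
      have hnq : n ≤ q := by
        by_contra hcon
        have h1 : p * (q + 1) ≤ p * n := Nat.mul_le_mul_left p (by omega)
        have h2 : p * (q + 1) = p * q + p := by ring
        omega
      set t := q - n with htdef
      have hm1 : p * t + p * n = p * q := by
        rw [← Nat.mul_add]; congr 1; omega
      have hmdecomp : p * t + r = m := by omega
      set a := n % p with hadef
      have ha : a < p := Nat.mod_lt _ hp0
      set n₁ := n / p with hn1def
      have hndecomp : p * n₁ + a = n := Nat.div_add_mod n p
      rw [← hmdecomp, ← hndecomp] at hdvd
      rw [lucas_not_dvd hp hr ha] at hdvd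
      obtain ⟨har, hdvd'⟩ := hdvd
      -- the base-p equation: t + p * n₁ + a = q
      have h5 : p * t + r + p * (p * n₁ + a) = p * q + r := by
        rw [hmdecomp, hndecomp]; exact heqN
      have h6 : p * (t + (p * n₁ + a)) = p * q := by
        rw [Nat.mul_add]; omega
      have h7 : t + (p * n₁ + a) = q := Nat.eq_of_mul_eq_mul_left hp0 h6
      refine ⟨a, by omega, (t, n₁), ?_, ?_⟩
      · rw [mem_Fs hp0]
        refine ⟨?_, ?_, hdvd'⟩
        · -- n₁ ≤ t
          by_contra hcon
          have h1 : p * (t + 1) ≤ p * n₁ := Nat.mul_le_mul_left p (by omega)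
          have h2 : p * (t + 1) = p * t + p := by ring
          omega
        · have := congrArg (Nat.cast : ℕ → ℤ) h7
          push_cast at this
          simp only
          linarith
      · simp only [Prod.mk.injEq]
        constructor <;> omega
    · rintro ⟨a, ha, ⟨m, n⟩, hmem, heq⟩
      rw [mem_Fs hp0] at hmem
      obtain ⟨hle, heqm, hdvd⟩ := hmem
      obtain ⟨m', n'⟩ := mn
      simp only [Prod.mk.injEq] at heq
      obtain ⟨h1, h2⟩ := heq
      subst h1; subst h2
      simp only at hle heqm hdvd ⊢
      have hmul := Nat.mul_le_mul_left p hle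
      refine ⟨by omega, ?_, ?_⟩
      · have h3 : (p : ℤ) * ((m : ℤ) + (p : ℤ) * n) = (p : ℤ) * ((q : ℤ) - a) := by
          rw [heqm]
        push_cast
        ring_nf
        ring_nf at h3
        linarith
      · rw [lucas_not_dvd hp hr (by omega)]
        exact ⟨by omega, hdvd⟩
  have hdisj : ∀ a ∈ Finset.range (r + 1), ∀ b ∈ Finset.range (r + 1), a ≠ b →
      Disjoint ((Fs p ((q : ℤ) - a)).image (fun mn => (p * mn.1 + r, p * mn.2 + a)))
        ((Fs p ((q : ℤ) - b)).image (fun mn => (p * mn.1 + r, p * mn.2 + b))) := by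
    intro a ha b hb hab
    simp only [Finset.mem_range] at ha hb
    rw [Finset.disjoint_left]
    rintro x hx1 hx2
    simp only [Finset.mem_image] at hx1 hx2
    obtain ⟨u, _, hu⟩ := hx1
    obtain ⟨v, _, hv⟩ := hx2
    apply hab
    have h2 : p * u.2 + a = p * v.2 + b := congrArg Prod.snd (hu.trans hv.symm)
    calc a = (p * u.2 + a) % p := by rw [Nat.mul_add_mod, Nat.mod_eq_of_lt (by omega)]
    _ = (p * v.2 + b) % p := by rw [h2]
    _ = b := by rw [Nat.mul_add_mod, Nat.mod_eq_of_lt (by omega)]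
  rw [key, Finset.card_biUnion hdisj]
  refine Finset.sum_congr rfl fun a _ => ?_
  apply Finset.card_image_of_injective
  intro x y hxy
  simp only [Prod.mk.injEq] at hxy
  have h1 : p * x.1 = p * y.1 := by omega
  have h2 : p * x.2 = p * y.2 := by omega
  exact Prod.ext (Nat.eq_of_mul_eq_mul_left hp0 h1) (Nat.eq_of_mul_eq_mul_left hp0 h2)
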